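/- arXiv:2509.26079 — 3 statements merged into one kernel-verified Lean document; each statement's English description precedes it below -/
import Mathlib

section
/- The function W(r) = n^{2−n} (∑_{k=1}^n 1/r_k^2)^{n/2} · (2π)^n ∏_{k=1}^n r_k, defined on unit vectors r ∈ R^n_{>0} with ∑ r_k^2 = 1, attains its minimum value n^2 (2π/√n)^n exactly at r = (1/√n, ..., 1/√n). -/
open Real Finset


lemma exp_form (n : ℕ) (hn : 0 < n) (r : Fin n → ℝ) (hr_pos : ∀ i, 0 < r i) :
    rexp (∑ i : Fin n, 1/(n:ℝ) * (-2 * log (r i))) = (∏ k, r k) ^ (-(2:ℝ)/(n:ℝ)) ∧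
    (∀ i, rexp (-2 * log (r i)) = 1 / (r i)^2) := by
  have hP : (0:ℝ) < ∏ k, r k := Finset.prod_pos fun i _ => hr_pos i
  constructor
  · rw [Real.rpow_def_of_pos hP, Real.log_prod (fun i _ => (hr_pos i).ne'), Finset.sum_mul]
    congr 1
    exact Finset.sum_congr rfl fun i _ => by ring
  · intro i
    rw [show (-2 : ℝ) * log (r i) = log (r i) * (-2) by ring, ← Real.rpow_def_of_pos (hr_pos i),
      Real.rpow_neg (hr_pos i).le, show ((2:ℝ)) = ((2:ℕ):ℝ) by norm_num, Real.rpow_natCast]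
    rw [one_div]

lemma amgm_le (n : ℕ) (hn : 0 < n) (r : Fin n → ℝ) (hr_pos : ∀ i, 0 < r i) :
    (n : ℝ) * (∏ k, r k) ^ (-(2:ℝ)/n) ≤ ∑ k, 1 / (r k) ^ 2 := by
  have hnR : (0:ℝ) < n := Nat.cast_pos.2 hn
  have h := convexOn_exp.map_sum_le (t := Finset.univ) (w := fun _ : Fin n => 1/(n:ℝ))
    (p := fun i => -2 * Real.log (r i))
    (fun i _ => by positivity) (by simp [Finset.card_univ]; field_simp)
    (fun i _ => Set.mem_univ _)
  simp only [smul_eq_mul] at h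
  obtain ⟨h1, h2⟩ := exp_form n hn r hr_pos
  rw [h1] at h
  simp only [h2] at h
  rw [← Finset.mul_sum] at h
  calc (n:ℝ) * (∏ k, r k) ^ (-(2:ℝ)/n) ≤ (n:ℝ) * (1/(n:ℝ) * ∑ i, 1/(r i)^2) :=
        by exact mul_le_mul_of_nonneg_left h hnR.le
    _ = ∑ k, 1/(r k)^2 := by field_simp

lemma amgm_lt (n : ℕ) (hn : 0 < n) (r : Fin n → ℝ) (hr_pos : ∀ i, 0 < r i)
    (hne : ∃ j k, r j ≠ r k) :
    (n : ℝ) * (∏ k, r k) ^ (-(2:ℝ)/n) < ∑ k, 1 / (r k) ^ 2 := by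
  have hnR : (0:ℝ) < n := Nat.cast_pos.2 hn
  obtain ⟨j, k, hjk⟩ := hne
  have hp : ∃ j ∈ Finset.univ, ∃ k ∈ Finset.univ, (fun i => -2 * Real.log (r i)) j ≠ (fun i => -2 * Real.log (r i)) k := by
    refine ⟨j, Finset.mem_univ _, k, Finset.mem_univ _, ?_⟩
    simp only [ne_eq]
    intro hc
    have : Real.log (r j) = Real.log (r k) := by linarith [mul_left_cancel₀ (show (-2:ℝ) ≠ 0 by norm_num) hc]
    exact hjk (Real.log_injOn_pos (Set.mem_Ioi.2 (hr_pos j)) (Set.mem_Ioi.2 (hr_pos k)) this)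
  have h := strictConvexOn_exp.map_sum_lt (t := Finset.univ) (w := fun _ : Fin n => 1/(n:ℝ))
    (p := fun i => -2 * Real.log (r i))
    (fun i _ => by positivity) (by simp [Finset.card_univ]; field_simp)
    (fun i _ => Set.mem_univ _) hp
  simp only [smul_eq_mul] at h
  obtain ⟨h1, h2⟩ := exp_form n hn r hr_pos
  rw [h1] at h
  simp only [h2] at h
  rw [← Finset.mul_sum] at h
  calc (n:ℝ) * (∏ k, r k) ^ (-(2:ℝ)/n) < (n:ℝ) * (1/(n:ℝ) * ∑ i, 1/(r i)^2) :=
        by exact (mul_lt_mul_iff_right₀ hnR).2 h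
    _ = ∑ k, 1/(r k)^2 := by field_simp


lemma sqrt_pow_eq (n : ℕ) : (Real.sqrt n) ^ n = (n:ℝ) ^ ((n:ℝ)/2) := by
  rw [Real.sqrt_eq_rpow, ← Real.rpow_natCast ((n:ℝ) ^ ((1:ℝ)/2)) n,
    ← Real.rpow_mul (Nat.cast_nonneg n)]
  congr 1
  ring

lemma M_eq (n : ℕ) (hn : 0 < n) :
    ((n:ℝ) ^ ((2:ℝ) - n) * (2 * π) ^ n) * (n:ℝ) ^ ((n:ℝ)/2)
      = (n:ℝ) ^ 2 * (2 * π / Real.sqrt n) ^ n := by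
  have hnR : (0:ℝ) < n := Nat.cast_pos.2 hn
  have hs : (0:ℝ) < (n:ℝ) ^ ((n:ℝ)/2) := Real.rpow_pos_of_pos hnR _
  rw [div_pow, sqrt_pow_eq]
  have e1 : (n:ℝ) ^ ((2:ℝ) - n) * (n:ℝ) ^ ((n:ℝ)/2) * (n:ℝ) ^ ((n:ℝ)/2) = (n:ℝ) ^ 2 := by
    rw [← Real.rpow_add hnR, ← Real.rpow_add hnR,
      show (2:ℝ) - n + (n:ℝ)/2 + (n:ℝ)/2 = 2 by ring,
      show ((2:ℝ)) = ((2:ℕ):ℝ) by norm_num, Real.rpow_natCast]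
  field_simp
  linear_combination e1

lemma K_const (n : ℕ) (hn : 0 < n) :
    (∑ _k : Fin n, 1/((1/Real.sqrt n):ℝ)^2) ^ ((n:ℝ)/2) * ∏ _k : Fin n, ((1/Real.sqrt n):ℝ)
      = (n:ℝ) ^ ((n:ℝ)/2) := by
  have hnR : (0:ℝ) < n := Nat.cast_pos.2 hn
  have hs2 : ((1:ℝ)/Real.sqrt n)^2 = 1/(n:ℝ) := by
    rw [div_pow, one_pow, Real.sq_sqrt hnR.le]
  simp only [hs2, one_div_one_div]
  rw [Finset.sum_const, Finset.prod_const, Finset.card_univ, Fintype.card_fin,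
    nsmul_eq_mul, one_div, ← Real.rpow_natCast (Real.sqrt n)⁻¹ n, ← Real.rpow_neg_one (Real.sqrt n),
    ← Real.rpow_mul (Real.sqrt_nonneg _), Real.sqrt_eq_rpow, ← Real.rpow_mul hnR.le]
  rw [show (n:ℝ) * n = (n:ℝ) ^ ((2:ℝ)) by
      rw [show ((2:ℝ)) = ((2:ℕ):ℝ) by norm_num, Real.rpow_natCast]; ring,
    ← Real.rpow_mul hnR.le, ← Real.rpow_add hnR]
  congr 1
  ring

lemma low_eq (n : ℕ) (hn : 0 < n) (r : Fin n → ℝ) (hr_pos : ∀ i, 0 < r i) :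
    ((n:ℝ) * (∏ k, r k) ^ (-(2:ℝ)/n)) ^ ((n:ℝ)/2) = (n:ℝ) ^ ((n:ℝ)/2) * (∏ k, r k)⁻¹ := by
  have hnR : (0:ℝ) < n := Nat.cast_pos.2 hn
  have hP : (0:ℝ) < ∏ k, r k := Finset.prod_pos fun i _ => hr_pos i
  rw [Real.mul_rpow hnR.le (Real.rpow_nonneg hP.le _), ← Real.rpow_mul hP.le,
    show (-(2:ℝ)/n) * ((n:ℝ)/2) = -1 by field_simp, Real.rpow_neg_one]

lemma K_ge (n : ℕ) (hn : 0 < n) (r : Fin n → ℝ) (hr_pos : ∀ i, 0 < r i) :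
    (n:ℝ) ^ ((n:ℝ)/2) ≤ (∑ k, 1 / (r k) ^ 2) ^ ((n:ℝ)/2) * ∏ k, r k := by
  have hnR : (0:ℝ) < n := Nat.cast_pos.2 hn
  have hP : (0:ℝ) < ∏ k, r k := Finset.prod_pos fun i _ => hr_pos i
  have hlow : (0:ℝ) < (n:ℝ) * (∏ k, r k) ^ (-(2:ℝ)/n) :=
    mul_pos hnR (Real.rpow_pos_of_pos hP _)
  have h1 : ((n:ℝ) * (∏ k, r k) ^ (-(2:ℝ)/n)) ^ ((n:ℝ)/2)
      ≤ (∑ k, 1 / (r k) ^ 2) ^ ((n:ℝ)/2) :=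
    Real.rpow_le_rpow hlow.le (amgm_le n hn r hr_pos) (by positivity)
  rw [low_eq n hn r hr_pos] at h1
  calc (n:ℝ) ^ ((n:ℝ)/2) = ((n:ℝ) ^ ((n:ℝ)/2) * (∏ k, r k)⁻¹) * ∏ k, r k := by
        field_simp
    _ ≤ (∑ k, 1 / (r k) ^ 2) ^ ((n:ℝ)/2) * ∏ k, r k :=
        mul_le_mul_of_nonneg_right h1 hP.le

lemma K_gt (n : ℕ) (hn : 0 < n) (r : Fin n → ℝ) (hr_pos : ∀ i, 0 < r i)
    (hne : ∃ j k, r j ≠ r k) :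
    (n:ℝ) ^ ((n:ℝ)/2) < (∑ k, 1 / (r k) ^ 2) ^ ((n:ℝ)/2) * ∏ k, r k := by
  have hnR : (0:ℝ) < n := Nat.cast_pos.2 hn
  have hP : (0:ℝ) < ∏ k, r k := Finset.prod_pos fun i _ => hr_pos i
  have hlow : (0:ℝ) < (n:ℝ) * (∏ k, r k) ^ (-(2:ℝ)/n) :=
    mul_pos hnR (Real.rpow_pos_of_pos hP _)
  have h1 : ((n:ℝ) * (∏ k, r k) ^ (-(2:ℝ)/n)) ^ ((n:ℝ)/2)
      < (∑ k, 1 / (r k) ^ 2) ^ ((n:ℝ)/2) :=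
    Real.rpow_lt_rpow hlow.le (amgm_lt n hn r hr_pos hne) (by positivity)
  rw [low_eq n hn r hr_pos] at h1
  calc (n:ℝ) ^ ((n:ℝ)/2) = ((n:ℝ) ^ ((n:ℝ)/2) * (∏ k, r k)⁻¹) * ∏ k, r k := by
        field_simp
    _ < (∑ k, 1 / (r k) ^ 2) ^ ((n:ℝ)/2) * ∏ k, r k :=
        (mul_lt_mul_iff_left₀ hP).2 h1


/-- The function
W(r) = n^{2−n} (∑ 1/r_k²)^{n/2} (2π)^n ∏ r_k, on unit vectors r with positive entries,
attains its minimum value n²(2π/√n)^n exactly at r = (1/√n, …, 1/√n). -/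
theorem W_min (n : ℕ) (hn : 0 < n) (r : Fin n → ℝ)
    (hr_pos : ∀ i, 0 < r i) (hr : ∑ i, (r i) ^ 2 = 1) :
    (n : ℝ) ^ 2 * (2 * π / Real.sqrt n) ^ n ≤
      (n : ℝ) ^ ((2 : ℝ) - n) * (∑ k, 1 / (r k) ^ 2) ^ ((n : ℝ) / 2) *
        (2 * π) ^ n * ∏ k, r k ∧
    ((n : ℝ) ^ ((2 : ℝ) - n) * (∑ k, 1 / (r k) ^ 2) ^ ((n : ℝ) / 2) *
        (2 * π) ^ n * ∏ k, r k = (n : ℝ) ^ 2 * (2 * π / Real.sqrt n) ^ n ↔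
      ∀ k, r k = 1 / Real.sqrt n) := by
  have hnR : (0:ℝ) < n := Nat.cast_pos.2 hn
  have hA : (0:ℝ) < (n:ℝ) ^ ((2:ℝ) - n) * (2 * π) ^ n := by
    have := Real.pi_pos; positivity
  have hW : (n : ℝ) ^ ((2 : ℝ) - n) * (∑ k, 1 / (r k) ^ 2) ^ ((n : ℝ) / 2) *
        (2 * π) ^ n * ∏ k, r k
      = ((n:ℝ) ^ ((2:ℝ) - n) * (2 * π) ^ n) *
        ((∑ k, 1 / (r k) ^ 2) ^ ((n : ℝ) / 2) * ∏ k, r k) := by ring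
  refine ⟨?_, ?_, ?_⟩
  · rw [← M_eq n hn, hW]
    exact mul_le_mul_of_nonneg_left (K_ge n hn r hr_pos) hA.le
  · intro heq
    by_contra hx
    push_neg at hx
    obtain ⟨k0, hk0⟩ := hx
    have hne : ∃ j k, r j ≠ r k := by
      by_contra hall
      push_neg at hall
      apply hk0
      have hsum : ∑ i : Fin n, (r i) ^ 2 = n * (r k0) ^ 2 := by
        rw [Finset.sum_congr rfl fun i _ => by rw [hall i k0], Finset.sum_const,
          Finset.card_univ, Fintype.card_fin, nsmul_eq_mul]
      have h2 : (r k0) ^ 2 = 1 / (n:ℝ) := by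
        rw [hsum] at hr; field_simp at hr ⊢; linarith
      rw [← Real.sqrt_sq (hr_pos k0).le, h2, one_div, Real.sqrt_inv, one_div]
    have hgt := K_gt n hn r hr_pos hne
    rw [hW, ← M_eq n hn] at heq
    have := mul_left_cancel₀ hA.ne' heq
    rw [this] at hgt
    exact lt_irrefl _ hgt
  · intro hk
    simp only [hk]
    rw [show ∀ a b c d : ℝ, a * b * c * d = (a * c) * (b * d) from fun a b c d => by ring,
      K_const n hn, M_eq n hn]
end

section
/- The unit vectors r_{L_1} = (1/(20√30))·(48,56,−76,28) and r_{L_2} = (1/(44√6))·(36,92,−16,−40) both have Euclidean norm 1, and no permutation and sign change of coordinates carries r_{L_1} to r_{L_2}; in particular r_{L_1} ≠ ±(r_{L_2} ∘ σ) for every permutation σ of 4 letters and choice of signs. -/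
open Finset

/-- The unit vectors r_{L_1} = (1/(20√30))(48,56,−76,28) and
r_{L_2} = (1/(44√6))(36,92,−16,−40) both have norm 1, and no permutation and sign
change of coordinates carries r_{L_1} to r_{L_2}. -/
theorem rL1_rL2_inequivalent :
    let r1 : Fin 4 → ℝ := fun i =>
      (1 / (20 * Real.sqrt 30)) * ![48, 56, -76, 28] i
    let r2 : Fin 4 → ℝ := fun i =>
      (1 / (44 * Real.sqrt 6)) * ![36, 92, -16, -40] i
    (∑ i, (r1 i) ^ 2 = 1) ∧ (∑ i, (r2 i) ^ 2 = 1) ∧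
      ∀ (σ : Equiv.Perm (Fin 4)) (ε : Fin 4 → ℝ),
        (∀ i, ε i = 1 ∨ ε i = -1) → ¬(∀ i, r1 i = ε i * r2 (σ i)) := by
  intro r1 r2
  have h30 : Real.sqrt 30 ^ 2 = 30 := Real.sq_sqrt (by norm_num)
  have h6 : Real.sqrt 6 ^ 2 = 6 := Real.sq_sqrt (by norm_num)
  have h30pos : (0:ℝ) < Real.sqrt 30 := Real.sqrt_pos.mpr (by norm_num)
  have h6pos : (0:ℝ) < Real.sqrt 6 := Real.sqrt_pos.mpr (by norm_num)
  refine ⟨?_, ?_, ?_⟩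
  · show ∑ i : Fin 4, (r1 i)^2 = 1
    simp only [r1, Fin.sum_univ_four]
    field_simp
    simp only [Matrix.cons_val]
    nlinarith [h30]
  · show ∑ i : Fin 4, (r2 i)^2 = 1
    simp only [r2, Fin.sum_univ_four]
    field_simp
    simp only [Matrix.cons_val]
    nlinarith [h6]
  · intro σ ε hε h
    have h0 := h 0
    have heps : (ε 0)^2 = 1 := by rcases hε 0 with h' | h' <;> rw [h'] <;> ring
    have hsq : (r1 0)^2 = (r2 (σ 0))^2 := by
      rw [h0, mul_pow, heps, one_mul]
    obtain ⟨j, hj⟩ : ∃ j, σ 0 = j := ⟨_, rfl⟩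
    rw [hj] at hsq
    have hL : (r1 0)^2 = 24/125 := by
      simp only [r1]
      field_simp
      simp only [Matrix.cons_val]
      nlinarith [h30]
    fin_cases j <;>
      simp only [r2, Matrix.cons_val_zero, Matrix.cons_val_one, Matrix.head_cons,
        Matrix.cons_val_two, Matrix.cons_val_three, Matrix.tail_cons] at hsq <;>
      rw [hL] at hsq <;>
      [skip; skip; skip; skip] <;>
      (field_simp at hsq; simp [Matrix.cons_val] at hsq; nlinarith [h6, h6pos])
end

section
/- Every finite subgroup of SO(4) acting freely on S^3 with abelian image is cyclic: if Γ ⊆ SO(4) is a finite abelian group acting freely on the unit sphere S^3 ⊂ R^4, then Γ is cyclic. -/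
open Finset

set_option maxHeartbeats 1000000
set_option synthInstance.maxHeartbeats 200000

/-- A finite abelian subgroup of SO(4) acting freely on S³ is cyclic. -/
theorem finite_abelian_free_subgroup_SO4_is_cyclic
    (Γ : Subgroup (Matrix.orthogonalGroup (Fin 4) ℝ)) [Finite Γ]
    (habelian : ∀ a b : Γ, a * b = b * a)
    (hdet : ∀ A : Γ, ((A : Matrix.orthogonalGroup (Fin 4) ℝ) :
      Matrix (Fin 4) (Fin 4) ℝ).det = 1)
    (hfree : ∀ A : Γ, A ≠ 1 → ∀ x : Fin 4 → ℝ, (∑ i, (x i) ^ 2 = 1) →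
      Matrix.mulVec ((A : Matrix.orthogonalGroup (Fin 4) ℝ) :
        Matrix (Fin 4) (Fin 4) ℝ) x ≠ x) :
    IsCyclic Γ := by
  classical
  -- the natural map to matrices
  let f : Γ → Matrix (Fin 4) (Fin 4) ℝ :=
    fun A => ((A : Matrix.orthogonalGroup (Fin 4) ℝ) : Matrix (Fin 4) (Fin 4) ℝ)
  have hfmul : ∀ A B : Γ, f (A * B) = f A * f B := fun A B => rfl
  have hf1 : f 1 = 1 := rfl
  -- freeness implies `f A - 1` is invertible for `A ≠ 1`
  have hinv : ∀ A : Γ, A ≠ 1 → IsUnit (f A - 1) := by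
    intro A hA
    rw [Matrix.isUnit_iff_isUnit_det, isUnit_iff_ne_zero]
    intro hdet0
    obtain ⟨v, hv0, hv⟩ := Matrix.exists_mulVec_eq_zero_iff.mpr hdet0
    have hAv : Matrix.mulVec (f A) v = v := by
      rw [Matrix.sub_mulVec, Matrix.one_mulVec, sub_eq_zero] at hv
      exact hv
    set c : ℝ := ∑ i, (v i) ^ 2 with hc
    have hcpos : 0 < c := by
      rcases Function.ne_iff.mp hv0 with ⟨i, hi⟩
      have hi' : v i ≠ 0 := hi
      have h1 : 0 < (v i) ^ 2 := pow_two_pos_of_ne_zero hi'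
      exact lt_of_lt_of_le h1
        (Finset.single_le_sum (fun j _ => sq_nonneg (v j)) (mem_univ i))
    set x : Fin 4 → ℝ := (Real.sqrt c)⁻¹ • v with hx
    have hxnorm : ∑ i, (x i) ^ 2 = 1 := by
      have hs : Real.sqrt c ≠ 0 := by positivity
      simp only [hx, Pi.smul_apply, smul_eq_mul, mul_pow, ← Finset.mul_sum, ← hc,
        inv_pow, Real.sq_sqrt hcpos.le]
      field_simp
    exact hfree A hA x hxnorm (by rw [hx, Matrix.mulVec_smul, hAv])
  -- the commutative algebra generated by Γ
  set S : Set (Matrix (Fin 4) (Fin 4) ℝ) := Set.range f with hS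
  have hScomm : ∀ a ∈ S, ∀ b ∈ S, a * b = b * a := by
    rintro a ⟨A, rfl⟩ b ⟨B, rfl⟩
    rw [← hfmul, ← hfmul, habelian]
  letI : CommRing (Algebra.adjoin ℝ S) := Algebra.adjoinCommRingOfComm ℝ hScomm
  haveI : Nontrivial (Algebra.adjoin ℝ S) :=
    ⟨⟨1, 0, fun h => one_ne_zero (α := Matrix (Fin 4) (Fin 4) ℝ)
      (by simpa using congrArg Subtype.val h)⟩⟩
  -- units in the matrix ring that lie in the adjoin are units of the adjoin
  have hRunit : ∀ y : Algebra.adjoin ℝ S,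
      IsUnit (y : Matrix (Fin 4) (Fin 4) ℝ) → IsUnit y := by
    intro y hy
    let L : Algebra.adjoin ℝ S →ₗ[ℝ] Algebra.adjoin ℝ S :=
      { toFun := fun r => y * r
        map_add' := fun r s => mul_add y r s
        map_smul' := fun c r => by simpa using (mul_smul_comm c y r) }
    have hLinj : Function.Injective L := by
      intro r s h
      apply Subtype.ext
      exact hy.mul_left_cancel (by exact congrArg Subtype.val h)
    obtain ⟨r, hr⟩ := (LinearMap.injective_iff_surjective).mp hLinj 1
    exact IsUnit.of_mul_eq_one (a := y) r hr
  obtain ⟨m, hm⟩ := Ideal.exists_maximal (Algebra.adjoin ℝ S)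
  haveI := hm
  letI : Field (Algebra.adjoin ℝ S ⧸ m) := Ideal.Quotient.field m
  -- the homomorphism into the quotient field
  let g : Γ →* Algebra.adjoin ℝ S ⧸ m :=
    { toFun := fun A => Ideal.Quotient.mk m ⟨f A, Algebra.subset_adjoin ⟨A, rfl⟩⟩
      map_one' := rfl
      map_mul' := fun A B => rfl }
    -- g sends nontrivial elements away from 1
  have hker : ∀ A : Γ, g A = 1 → A = 1 := by
    intro A hA
    by_contra hA1
    have hmem : (⟨f A, Algebra.subset_adjoin ⟨A, rfl⟩⟩ : Algebra.adjoin ℝ S) - 1 ∈ m := by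
      rw [← Ideal.Quotient.eq]
      exact hA.trans (map_one (Ideal.Quotient.mk m)).symm
    have hunit : IsUnit ((⟨f A, Algebra.subset_adjoin ⟨A, rfl⟩⟩ : Algebra.adjoin ℝ S) - 1) := by
      apply hRunit
      exact hinv A hA1
    exact hm.ne_top (m.eq_top_of_isUnit_mem hmem hunit)
  have hginj : Function.Injective g := by
    intro A B hAB
    have hBunit : g B ≠ 0 := by
      intro h0
      have : (1 : Algebra.adjoin ℝ S ⧸ m) = 0 := by
        rw [← g.map_one, ← mul_inv_cancel B, g.map_mul, h0, zero_mul]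
      exact one_ne_zero this
    have h1 : g (A * B⁻¹) * g B = g B := by
      rw [← g.map_mul, inv_mul_cancel_right, hAB]
    have h2 : g (A * B⁻¹) = 1 := by
      have := mul_right_cancel₀ hBunit (h1.trans (one_mul (g B)).symm)
      exact this
    have := hker _ h2
    rw [mul_inv_eq_one] at this
    exact this
  exact isCyclic_of_subgroup_isDomain g hginj
end
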